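/- arXiv:1301.0192 — 6 statements merged into one kernel-verified Lean document; each statement's English description precedes it below -/
import Mathlib

section
/- Let F be a field and z, z', z'' ∈ F all nonzero with z·z'·z'' = −1 and z'' + z⁻¹ − 1 = 0 (the octahedron phase-space and Lagrangian relations). Then the same relations hold after the cyclic rotation z → z' → z'' → z; that is, z + (z')⁻¹ − 1 = 0 and z' + (z'')⁻¹ − 1 = 0. -/
/-- The octahedron phase-space relation `z·z'·z'' = −1` together with the
Lagrangian relation `z'' + z⁻¹ − 1 = 0` are invariant under the cyclic
rotation `z → z' → z'' → z`: one also has `z + (z')⁻¹ − 1 = 0` and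
`z' + (z'')⁻¹ − 1 = 0`. -/
theorem octahedron_relations_cyclic
    {F : Type*} [Field F] (z z' z'' : F)
    (hz : z ≠ 0) (hz' : z' ≠ 0) (hz'' : z'' ≠ 0)
    (hprod : z * z' * z'' = -1)
    (hlag : z'' + z⁻¹ - 1 = 0) :
    z + z'⁻¹ - 1 = 0 ∧ z' + z''⁻¹ - 1 = 0 := by
  have h1 : z'' * z + 1 - z = 0 := by
    field_simp at hlag; linear_combination hlag
  have hg1 : z + z'⁻¹ - 1 = 0 := by
    field_simp
    linear_combination hprod - z' * h1
  refine ⟨hg1, ?_⟩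
  have hinv : z''⁻¹ = -(z * z') := by
    field_simp
    linear_combination hprod
  rw [hinv]
  have hg1' : z * z' + 1 - z' = 0 := by
    have := hg1; field_simp at this; linear_combination this
  linear_combination -hg1'
end

section
/- (Algebraic 2→3 move.) Let F be a field and w₁, w₂, w₃ ∈ F with each wᵢ ≠ 0, wᵢ ≠ 1, and w₁w₂w₃ = 1. Define z₁ := w₂''·w₃' and z₂ := w₂'·w₃''. Then z₁ ≠ 0, z₁ ≠ 1, z₂ ≠ 0, z₂ ≠ 1, and the following five relations hold: z₁·z₂ = w₁; z₁' = w₃''·w₁'; z₁'' = w₁''·w₂'; z₂' = w₁'·w₂''; z₂'' = w₃'·w₁''. -/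
/-- The octahedron parameter `t' := (1−t)⁻¹`. -/
def oPrime {F : Type*} [Field F] (t : F) : F := (1 - t)⁻¹

/-- The octahedron parameter `t'' := 1 − t⁻¹`. -/
def oDPrime {F : Type*} [Field F] (t : F) : F := 1 - t⁻¹

/-- The algebraic 2→3 move: given octahedron parameters `w₁, w₂, w₃`
(each `≠ 0, 1`) satisfying the internal gluing constraint `w₁w₂w₃ = 1`,
the parameters `z₁ := w₂''·w₃'` and `z₂ := w₂'·w₃''` are again `≠ 0, 1`
and satisfy the five boundary relations `z₁·z₂ = w₁`, `z₁' = w₃''·w₁'`,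
`z₁'' = w₁''·w₂'`, `z₂' = w₁'·w₂''`, `z₂'' = w₃'·w₁''`. -/
theorem two_three_move
    {F : Type*} [Field F] (w₁ w₂ w₃ : F)
    (hw₁0 : w₁ ≠ 0) (hw₁1 : w₁ ≠ 1)
    (hw₂0 : w₂ ≠ 0) (hw₂1 : w₂ ≠ 1)
    (hw₃0 : w₃ ≠ 0) (hw₃1 : w₃ ≠ 1)
    (hglue : w₁ * w₂ * w₃ = 1) :
    oDPrime w₂ * oPrime w₃ ≠ 0 ∧ oDPrime w₂ * oPrime w₃ ≠ 1 ∧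
    oPrime w₂ * oDPrime w₃ ≠ 0 ∧ oPrime w₂ * oDPrime w₃ ≠ 1 ∧
    (oDPrime w₂ * oPrime w₃) * (oPrime w₂ * oDPrime w₃) = w₁ ∧
    oPrime (oDPrime w₂ * oPrime w₃) = oDPrime w₃ * oPrime w₁ ∧
    oDPrime (oDPrime w₂ * oPrime w₃) = oDPrime w₁ * oPrime w₂ ∧
    oPrime (oPrime w₂ * oDPrime w₃) = oPrime w₁ * oDPrime w₂ ∧
    oDPrime (oPrime w₂ * oDPrime w₃) = oPrime w₃ * oDPrime w₁ := by
  have h1 : (1 : F) - w₁ ≠ 0 := sub_ne_zero.mpr (Ne.symm hw₁1)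
  have h2 : (1 : F) - w₂ ≠ 0 := sub_ne_zero.mpr (Ne.symm hw₂1)
  have h3 : (1 : F) - w₃ ≠ 0 := sub_ne_zero.mpr (Ne.symm hw₃1)
  have h23 : w₂ * w₃ - 1 ≠ 0 := by
    intro h
    exact hw₁1 (by calc w₁ = w₁ * (w₂ * w₃) := by rw [sub_eq_zero.mp h, mul_one]
      _ = 1 := by rw [← mul_assoc]; exact hglue)
  have h2' : (1 : F) - w₂⁻¹ ≠ 0 := by
    intro h
    have hh : w₂⁻¹ = 1 := (sub_eq_zero.mp h).symm
    exact hw₂1 (by rw [← inv_inv w₂, hh, inv_one])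
  have h3' : (1 : F) - w₃⁻¹ ≠ 0 := by
    intro h
    have hh : w₃⁻¹ = 1 := (sub_eq_zero.mp h).symm
    exact hw₃1 (by rw [← inv_inv w₃, hh, inv_one])
  have hz₁0 : oDPrime w₂ * oPrime w₃ ≠ 0 :=
    mul_ne_zero h2' (inv_ne_zero h3)
  have hz₁1 : oDPrime w₂ * oPrime w₃ ≠ 1 := by
    unfold oDPrime oPrime
    intro h
    apply h23
    field_simp at h
    linear_combination h
  have hz₂0 : oPrime w₂ * oDPrime w₃ ≠ 0 :=
    mul_ne_zero (inv_ne_zero h2) h3'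
  have hz₂1 : oPrime w₂ * oDPrime w₃ ≠ 1 := by
    unfold oDPrime oPrime
    intro h
    apply h23
    field_simp at h
    linear_combination h
  have hz₁1' : (1 : F) - oDPrime w₂ * oPrime w₃ ≠ 0 := sub_ne_zero.mpr (Ne.symm hz₁1)
  have hz₂1' : (1 : F) - oPrime w₂ * oDPrime w₃ ≠ 0 := sub_ne_zero.mpr (Ne.symm hz₂1)
  have h23a : (1:F) - w₂ * w₃ ≠ 0 := fun h => h23 (by linear_combination -h)
  have h23b : (-1:F) + w₂ * w₃ ≠ 0 := fun h => h23 (by linear_combination h)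
  have h2n : (-1:F) + w₂ ≠ 0 := fun h => h2 (by linear_combination -h)
  have h3n : (-1:F) + w₃ ≠ 0 := fun h => h3 (by linear_combination -h)
  have hw1 : w₁ = (w₂ * w₃)⁻¹ := by
    field_simp
    linear_combination hglue
  have hx : (1 - w₂ * w₃) * (1 - w₂ * w₃)⁻¹ = 1 := mul_inv_cancel₀ h23a
  have hx2 : (-1 + w₂) * (-1 + w₂)⁻¹ = 1 := mul_inv_cancel₀ h2n
  have hx3 : (-1 + w₃) * (-1 + w₃)⁻¹ = 1 := mul_inv_cancel₀ h3n
  refine ⟨hz₁0, hz₁1, hz₂0, hz₂1, ?_, ?_, ?_, ?_, ?_⟩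
  · unfold oDPrime oPrime
    rw [hw1]
    field_simp
    ring
  · unfold oDPrime oPrime
    rw [hw1]
    field_simp
    linear_combination (w₃ - 1) * hx
  · unfold oDPrime oPrime
    rw [hw1]
    field_simp
    ring
  · unfold oDPrime oPrime
    rw [hw1]
    field_simp
    linear_combination (w₂ - 1) * hx
  · unfold oDPrime oPrime
    rw [hw1]
    field_simp
    ring
end

section
/- (Algebraic 3→2 move.) Let F be a field and z₁, z₂ ∈ F with each zᵢ ≠ 0, zᵢ ≠ 1, and z₁z₂ ≠ 1. Define w₁ := z₁·z₂, w₂ := z₁'·z₂'', w₃ := z₁''·z₂'. Then each wᵢ ≠ 0 and wᵢ ≠ 1, the gluing constraint w₁w₂w₃ = 1 holds, and conversely z₁ = w₂''·w₃' and z₂ = w₂'·w₃''. -/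
/-- The algebraic 3→2 move: given octahedron parameters `z₁, z₂`
(each `≠ 0, 1`) with `z₁z₂ ≠ 1`, the parameters `w₁ := z₁·z₂`,
`w₂ := z₁'·z₂''`, `w₃ := z₁''·z₂'` are each `≠ 0, 1`, satisfy the gluing
constraint `w₁w₂w₃ = 1`, and conversely `z₁ = w₂''·w₃'` and `z₂ = w₂'·w₃''`. -/
theorem three_two_move
    {F : Type*} [Field F] (z₁ z₂ : F)
    (hz₁0 : z₁ ≠ 0) (hz₁1 : z₁ ≠ 1)
    (hz₂0 : z₂ ≠ 0) (hz₂1 : z₂ ≠ 1)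
    (hnd : z₁ * z₂ ≠ 1) :
    z₁ * z₂ ≠ 0 ∧ z₁ * z₂ ≠ 1 ∧
    oPrime z₁ * oDPrime z₂ ≠ 0 ∧ oPrime z₁ * oDPrime z₂ ≠ 1 ∧
    oDPrime z₁ * oPrime z₂ ≠ 0 ∧ oDPrime z₁ * oPrime z₂ ≠ 1 ∧
    (z₁ * z₂) * (oPrime z₁ * oDPrime z₂) * (oDPrime z₁ * oPrime z₂) = 1 ∧
    z₁ = oDPrime (oPrime z₁ * oDPrime z₂) * oPrime (oDPrime z₁ * oPrime z₂) ∧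
    z₂ = oPrime (oPrime z₁ * oDPrime z₂) * oDPrime (oDPrime z₁ * oPrime z₂) := by
  have h1 : (1 : F) - z₁ ≠ 0 := sub_ne_zero.mpr (Ne.symm hz₁1)
  have h2 : (1 : F) - z₂ ≠ 0 := sub_ne_zero.mpr (Ne.symm hz₂1)
  have hd1 : (1 : F) - z₁⁻¹ ≠ 0 := by
    intro h
    rw [sub_eq_zero] at h
    exact hz₁1 (inv_eq_one.mp h.symm)
  have hd2 : (1 : F) - z₂⁻¹ ≠ 0 := by
    intro h
    rw [sub_eq_zero] at h
    exact hz₂1 (inv_eq_one.mp h.symm)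
  have hw2 : oPrime z₁ * oDPrime z₂ ≠ 0 := by
    simp only [oPrime, oDPrime]
    exact mul_ne_zero (inv_ne_zero h1) hd2
  have hw3 : oDPrime z₁ * oPrime z₂ ≠ 0 := by
    simp only [oPrime, oDPrime]
    exact mul_ne_zero hd1 (inv_ne_zero h2)
  have hw21 : oPrime z₁ * oDPrime z₂ ≠ 1 := by
    simp only [oPrime, oDPrime]
    intro h
    apply hnd
    field_simp at h
    linear_combination h
  have hw31 : oDPrime z₁ * oPrime z₂ ≠ 1 := by
    simp only [oPrime, oDPrime]
    intro h
    apply hnd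
    field_simp at h
    linear_combination h
  have hs2 : (1 : F) - oPrime z₁ * oDPrime z₂ ≠ 0 := sub_ne_zero.mpr (Ne.symm hw21)
  have hs3 : (1 : F) - oDPrime z₁ * oPrime z₂ ≠ 0 := sub_ne_zero.mpr (Ne.symm hw31)
  have hnd' : (1:F) - z₁ * z₂ ≠ 0 := sub_ne_zero.mpr (Ne.symm hnd)
  have hnd'' : (-1:F) + z₁ * z₂ ≠ 0 := by intro h; exact hnd' (by linear_combination -h)
  have h1' : (-1:F) + z₁ ≠ 0 := by intro h; exact h1 (by linear_combination -h)
  have h2' : (-1:F) + z₂ ≠ 0 := by intro h; exact h2 (by linear_combination -h)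
  have h1s : z₁ - 1 ≠ 0 := sub_ne_zero.mpr hz₁1
  have h2s : z₂ - 1 ≠ 0 := sub_ne_zero.mpr hz₂1
  have A : (1 : F) - ((1-z₁)⁻¹*(1-z₂⁻¹))⁻¹ = (z₁*z₂-1) * (z₂-1)⁻¹ := by
    rw [mul_inv, inv_inv]
    field_simp
    ring
  have B : ((1 : F) - (1-z₁⁻¹)*(1-z₂)⁻¹)⁻¹ = z₁*(1-z₂)*(1-z₁*z₂)⁻¹ := by
    rw [show (1:F) - (1-z₁⁻¹)*(1-z₂)⁻¹ = (1-z₁*z₂)*(z₁*(1-z₂))⁻¹ from by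
      field_simp; ring]
    rw [mul_inv, inv_inv]
    field_simp
  have C : ((1 : F) - (1-z₁)⁻¹*(1-z₂⁻¹))⁻¹ = z₂*(1-z₁)*(1-z₁*z₂)⁻¹ := by
    rw [show (1:F) - (1-z₁)⁻¹*(1-z₂⁻¹) = (1-z₁*z₂)*(z₂*(1-z₁))⁻¹ from by
      field_simp; ring]
    rw [mul_inv, inv_inv]
    field_simp
  have D : (1 : F) - ((1-z₁⁻¹)*(1-z₂)⁻¹)⁻¹ = (z₁*z₂-1) * (z₁-1)⁻¹ := by
    rw [mul_inv, inv_inv]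
    field_simp
    ring
  refine ⟨mul_ne_zero hz₁0 hz₂0, hnd, hw2, hw21, hw3, hw31, ?_, ?_, ?_⟩
  · simp only [oPrime, oDPrime]
    field_simp
    ring
  · simp only [oPrime, oDPrime]
    rw [A, B]
    field_simp
    ring
  · simp only [oPrime, oDPrime]
    rw [C, D]
    have : (1:F) - z₂ * z₁ ≠ 0 := by rwa [mul_comm]
    field_simp
    ring
end

section
/- Let F be a field and z, z', z'' ∈ F all nonzero. Let M be the 2×2 matrix product (E·H(−z''))·(E·H(−z'))·(E·H(−z)), where E is the elementary unipotent matrix with rows (1,0) and (1,1), and H(t) is the diagonal matrix diag(1,t). Then M is the identity matrix if and only if z·z'·z'' = −1 and z'' + z⁻¹ − 1 = 0. -/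
/-- Snake holonomy around a black tetrahedron: the product
`(E·H(−z''))·(E·H(−z'))·(E·H(−z))` of elementary unipotent matrices
`E = [[1,0],[1,1]]` and fin-flip matrices `H(t) = diag(1,t)` is the identity
matrix if and only if the octahedron relations `z·z'·z'' = −1` and
`z'' + z⁻¹ − 1 = 0` hold. -/
theorem snake_holonomy_trivial_iff
    {F : Type*} [Field F] (z z' z'' : F)
    (hz : z ≠ 0) (hz' : z' ≠ 0) (hz'' : z'' ≠ 0) :
    ((!![1, 0; 1, 1] : Matrix (Fin 2) (Fin 2) F) * !![1, 0; 0, -z'']) *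
      ((!![1, 0; 1, 1] : Matrix (Fin 2) (Fin 2) F) * !![1, 0; 0, -z']) *
      ((!![1, 0; 1, 1] : Matrix (Fin 2) (Fin 2) F) * !![1, 0; 0, -z]) = 1 ↔
    z * z' * z'' = -1 ∧ z'' + z⁻¹ - 1 = 0 := by
  simp only [Matrix.mul_fin_two, Matrix.one_fin_two]
  rw [Matrix.ext_iff.symm]
  constructor
  · intro h
    have h10 := h 1 0
    have h11 := h 1 1
    simp [Matrix.cons_val_zero, Matrix.cons_val_one] at h10 h11
    constructor
    · linear_combination -h11
    · field_simp
      linear_combination -z * h10 - h11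
  · rintro ⟨h1, h2⟩
    have e : z' * z'' = -z⁻¹ := by
      field_simp
      linear_combination h1
    intro i j
    fin_cases i <;> fin_cases j
    · simp
    · simp
    · simp
      linear_combination e - h2
    · simp
      linear_combination -h1
end

section
/- Let F be a field, V an F-vector space of dimension K ≥ 1, and f : V → V a linear endomorphism whose characteristic polynomial has K pairwise distinct roots in F (equivalently, f is diagonalizable with K distinct eigenvalues). Then the set of complete f-invariant flags in V — chains 0 = W₀ ≤ W₁ ≤ ⋯ ≤ W_K = V with dim Wᵢ = i and f(Wᵢ) ⊆ Wᵢ for all i — is finite and has exactly K! elements. -/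
open Module Polynomial Matrix

section Aux

variable {F : Type*} [Field F] {V : Type*} [AddCommGroup V] [Module F V]
  [FiniteDimensional F V]

lemma aux_hasEigenvalue (f : Module.End F V) (c : F)
    (h0 : eval c (LinearMap.charpoly (f : V →ₗ[F] V)) = 0) :
    f.HasEigenvalue c := by
  let b := Module.finBasis F V
  let A := LinearMap.toMatrix b b (f : V →ₗ[F] V)
  have hA : A.charpoly = LinearMap.charpoly (f : V →ₗ[F] V) :=
    LinearMap.charpoly_toMatrix _ b
  have hdet : LinearMap.det ((algebraMap F (Module.End F V) c) - f) = 0 := by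
    rw [← LinearMap.det_toMatrix b]
    have h1 : (charmatrix A).map (evalRingHom c) = c • (1 : Matrix _ _ F) - A := by
      ext i j
      by_cases hij : i = j <;>
        simp [charmatrix_apply, hij, Matrix.one_apply, Matrix.diagonal_apply]
    have h2 : LinearMap.toMatrix b b ((algebraMap F (Module.End F V) c) - f)
        = c • (1 : Matrix _ _ F) - A := by
      rw [map_sub, Module.algebraMap_end_eq_smul_id, _root_.map_smul, LinearMap.toMatrix_id]
    rw [h2, ← h1]
    have h3 : ((charmatrix A).map (evalRingHom c)).det = (evalRingHom c) (charmatrix A).det := by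
      rw [RingHom.map_det]; rfl
    rw [h3]
    show eval c (charmatrix A).det = 0
    rw [show A.charmatrix.det = A.charpoly from rfl, hA]
    exact h0
  have hker := LinearMap.bot_lt_ker_of_det_eq_zero hdet
  obtain ⟨x, hx, hx0⟩ := SetLike.exists_of_lt hker
  refine Module.End.hasEigenvalue_of_hasEigenvector (x := x) ⟨?_, hx0⟩
  rw [Module.End.mem_eigenspace_iff]
  have := LinearMap.mem_ker.mp hx
  simp only [LinearMap.sub_apply, Module.algebraMap_end_apply, sub_eq_zero] at this
  exact this.symm

lemma aux_finrank_biSup {ι : Type*} [DecidableEq ι] {E : ι → Submodule F V}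
    (hE : iSupIndep E) (s : Finset ι) :
    finrank F ↥(⨆ i ∈ s, E i) = ∑ i ∈ s, finrank F ↥(E i) := by
  classical
  induction s using Finset.induction_on with
  | empty => simp
  | @insert a s ha ih =>
      have hsup : (⨆ i ∈ insert a s, E i) = E a ⊔ ⨆ i ∈ s, E i := by
        simp [iSup_or, iSup_sup_eq]
      have hdisj : Disjoint (E a) (⨆ i ∈ (s : Set ι), E i) :=
        hE.disjoint_biSup (by simpa using ha)
      have hdisj' : Disjoint (E a) (⨆ i ∈ s, E i) := by
        simpa using hdisj
      rw [hsup, Finset.sum_insert ha, ← ih]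
      have := Submodule.finrank_sup_add_finrank_inf_eq (E a) (⨆ i ∈ s, E i)
      rw [hdisj'.eq_bot] at this
      simpa using this

lemma aux_eigen (K : ℕ) (hdim : Module.finrank F V = K)
    (f : Module.End F V) (μ : Fin K → F) (hμ : Function.Injective μ)
    (hchar : LinearMap.charpoly (f : V →ₗ[F] V)
      = ∏ i : Fin K, (Polynomial.X - Polynomial.C (μ i))) :
    (∀ j, finrank F ↥(f.eigenspace (μ j)) = 1) ∧
      (⨆ j, f.eigenspace (μ j)) = ⊤ := by
  classical
  set E : Fin K → Submodule F V := fun j => f.eigenspace (μ j) with hE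
  have hEi : iSupIndep E := f.eigenspaces_iSupIndep.comp hμ
  have hev : ∀ j, f.HasEigenvalue (μ j) := by
    intro j
    apply aux_hasEigenvalue
    rw [hchar, eval_prod]
    exact Finset.prod_eq_zero (Finset.mem_univ j) (by simp)
  have hpos : ∀ j, 0 < finrank F ↥(E j) := by
    intro j
    rw [finrank_pos_iff]
    exact (Submodule.nontrivial_iff_ne_bot).mpr (hev j)
  have hsum_le : ∑ j : Fin K, finrank F ↥(E j) ≤ K := by
    rw [← aux_finrank_biSup hEi Finset.univ]
    exact le_trans (Submodule.finrank_le _) (le_of_eq hdim)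
  have hK_le : K ≤ ∑ j : Fin K, finrank F ↥(E j) := by
    have := Finset.card_nsmul_le_sum Finset.univ (fun j => finrank F ↥(E j)) 1
      (fun j _ => hpos j)
    simpa using this
  have hsum_eq : ∑ j : Fin K, finrank F ↥(E j) = K := le_antisymm hsum_le hK_le
  have hone : ∀ j, finrank F ↥(E j) = 1 := by
    intro j
    have h1 : (K - 1) ≤ ∑ i ∈ Finset.univ.erase j, finrank F ↥(E i) := by
      have := Finset.card_nsmul_le_sum (Finset.univ.erase j)
        (fun i => finrank F ↥(E i)) 1 (fun i _ => hpos i)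
      simpa [Finset.card_erase_of_mem] using this
    have h2 : ∑ i ∈ Finset.univ.erase j, finrank F ↥(E i) + finrank F ↥(E j) = K := by
      rw [Finset.sum_erase_add _ _ (Finset.mem_univ j)]; exact hsum_eq
    have := hpos j
    omega
  refine ⟨hone, ?_⟩
  have h3 : (⨆ j ∈ Finset.univ, E j) = ⨆ j, E j := by simp
  have h4 : finrank F ↥(⨆ j, E j) = K := by
    rw [← h3, aux_finrank_biSup hEi Finset.univ]; exact hsum_eq
  exact Submodule.eq_top_of_finrank_eq (h4.trans hdim.symm)

end Aux

/-- If `f` is an endomorphism of a `K`-dimensional vector space `V` over `F`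
whose characteristic polynomial has `K` pairwise distinct roots in `F`, then
the set of complete `f`-invariant flags in `V` is finite with exactly `K!`
elements. -/
theorem card_invariant_flags_of_distinct_eigenvalues
    {F : Type*} [Field F] {V : Type*} [AddCommGroup V] [Module F V]
    [FiniteDimensional F V] (K : ℕ) (hK : 1 ≤ K)
    (hdim : Module.finrank F V = K)
    (f : Module.End F V) (μ : Fin K → F) (hμ : Function.Injective μ)
    (hchar : LinearMap.charpoly (f : V →ₗ[F] V)
      = ∏ i : Fin K, (Polynomial.X - Polynomial.C (μ i))) :
    Set.Finite {W : Fin (K + 1) → Submodule F V |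
        (∀ i : Fin K, W i.castSucc ≤ W i.succ) ∧
        (∀ i : Fin (K + 1), Module.finrank F (W i) = (i : ℕ)) ∧
        (∀ i : Fin (K + 1), ∀ x ∈ W i, f x ∈ W i)} ∧
    Set.ncard {W : Fin (K + 1) → Submodule F V |
        (∀ i : Fin K, W i.castSucc ≤ W i.succ) ∧
        (∀ i : Fin (K + 1), Module.finrank F (W i) = (i : ℕ)) ∧
        (∀ i : Fin (K + 1), ∀ x ∈ W i, f x ∈ W i)} = Nat.factorial K := by
  classical
  obtain ⟨hone, htop⟩ := aux_eigen K hdim f μ hμ hchar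
  set E : Fin K → Submodule F V := fun j => f.eigenspace (μ j) with hEdef
  have hEi : iSupIndep E := f.eigenspaces_iSupIndep.comp hμ
  have hEbot : ∀ j, E j ≠ ⊥ := by
    intro j h
    have h1 := hone j
    rw [show f.eigenspace (μ j) = E j from rfl, h] at h1
    simp at h1
  -- membership criterion
  have hled : ∀ (s : Finset (Fin K)) (j : Fin K), (E j ≤ ⨆ i ∈ s, E i) ↔ j ∈ s := by
    intro s j
    constructor
    · intro h
      by_contra hj
      have hdisj : Disjoint (E j) (⨆ i ∈ (s : Set (Fin K)), E i) :=
        hEi.disjoint_biSup (by simpa using hj)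
      have : E j = ⊥ := by
        have := hdisj.mono_right (le_of_eq (by simp) :
          (⨆ i ∈ (s : Set (Fin K)), E i) ≤ ⨆ i ∈ s, E i)
        exact (disjoint_self.mp (this.mono_right h))
      exact hEbot j this
    · intro hj
      exact le_biSup E hj
  -- invariant subspace structure
  have hstruct : ∀ W : Submodule F V, (∀ x ∈ W, f x ∈ W) →
      W = ⨆ j ∈ Finset.univ.filter (fun j => E j ≤ W), E j := by
    intro W hW
    have htop' : ⨆ c : F, (f.genEigenspace c) 1 = ⊤ := by
      rw [eq_top_iff, ← htop]
      exact iSup_le fun j => le_iSup_of_le (μ j) le_rfl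
    have hdec := Submodule.eq_iSup_inf_genEigenspace (p := W) (f := f) 1 hW htop'
    apply le_antisymm
    · conv_lhs => rw [hdec]
      apply iSup_le
      intro c
      by_cases hc : ∃ j, μ j = c
      · obtain ⟨j, rfl⟩ := hc
        by_cases hEj : E j ≤ W
        · exact le_trans inf_le_right
            (le_biSup E (Finset.mem_filter.mpr ⟨Finset.mem_univ j, hEj⟩))
        · have hbot : W ⊓ E j = ⊥ := by
            by_contra hne
            have h1 : 1 ≤ finrank F ↥(W ⊓ E j) := by
              rw [Nat.one_le_iff_ne_zero]
              intro h0
              exact hne (Submodule.finrank_eq_zero.mp h0)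
            have := Submodule.eq_of_le_of_finrank_le (inf_le_right : W ⊓ E j ≤ E j)
              (by rw [hone j]; exact h1)
            exact hEj (this ▸ inf_le_left)
          exact le_of_eq_of_le hbot bot_le
      · have hcbot : (f.genEigenspace c) 1 = ⊥ := by
          have hdisj : Disjoint (f.eigenspace c) (⨆ m ∈ Set.range μ, f.eigenspace m) :=
            f.eigenspaces_iSupIndep.disjoint_biSup (by simpa using hc)
          have hr : (⨆ m ∈ Set.range μ, f.eigenspace m) = ⊤ := by
            rw [iSup_range]
            exact htop
          rw [hr, disjoint_top] at hdisj
          exact hdisj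
        rw [hcbot]
        simp
    · apply iSup_le
      intro j
      apply iSup_le
      intro hj
      exact (Finset.mem_filter.mp hj).2
  -- the parametrization by permutations
  set Ψ : Equiv.Perm (Fin K) → (Fin (K + 1) → Submodule F V) :=
    fun σ i => ⨆ j ∈ Finset.univ.filter (fun j => ((σ j : Fin K) : ℕ) < (i : ℕ)), E j
    with hΨdef
  have hcard_filter : ∀ (σ : Equiv.Perm (Fin K)) (i : Fin (K + 1)),
      (Finset.univ.filter (fun j => ((σ j : Fin K) : ℕ) < (i : ℕ))).card = (i : ℕ) := by
    intro σ i
    have h1 : (Finset.univ.filter (fun j : Fin K => ((σ j : Fin K) : ℕ) < (i : ℕ))).card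
        = (Finset.univ.filter (fun k : Fin K => (k : ℕ) < (i : ℕ))).card := by
      apply Finset.card_bij (fun j _ => σ j)
      · intro j hj
        simp only [Finset.mem_filter, Finset.mem_univ, true_and] at hj ⊢
        exact hj
      · intro a ha b hb hab
        exact σ.injective hab
      · intro k hk
        exact ⟨σ.symm k, by simpa using hk, by simp⟩
    have h2 : (Finset.univ.filter (fun k : Fin K => (k : ℕ) < (i : ℕ))).card
        = (Finset.range (i : ℕ)).card := by
      apply Finset.card_bij (fun (k : Fin K) _ => (k : ℕ))
      · intro k hk
        simp only [Finset.mem_filter] at hk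
        simpa using hk.2
      · intro a _ b _ hab
        exact Fin.val_injective hab
      · intro n hn
        rw [Finset.mem_range] at hn
        have hnK : n < K := lt_of_lt_of_le hn (Nat.lt_succ_iff.mp i.isLt)
        exact ⟨⟨n, hnK⟩, by simpa using hn, rfl⟩
    rw [h1, h2, Finset.card_range]
  -- ranks of the flags Ψ σ
  have hrankΨ : ∀ (σ : Equiv.Perm (Fin K)) (i : Fin (K + 1)),
      finrank F ↥(Ψ σ i) = (i : ℕ) := by
    intro σ i
    show finrank F ↥(⨆ j ∈ Finset.univ.filter
      (fun j => ((σ j : Fin K) : ℕ) < (i : ℕ)), E j) = (i : ℕ)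
    rw [aux_finrank_biSup hEi, Finset.sum_congr rfl (fun j _ => hone j)]
    simpa using hcard_filter σ i
  -- invariance of sups of eigenspaces
  have hinvsup : ∀ (s : Finset (Fin K)), ∀ x ∈ (⨆ j ∈ s, E j), f x ∈ (⨆ j ∈ s, E j) := by
    intro s
    have hmap : Submodule.map (f : V →ₗ[F] V) (⨆ j ∈ s, E j) ≤ ⨆ j ∈ s, E j := by
      rw [Submodule.map_iSup]
      apply iSup_mono
      intro j
      rw [Submodule.map_iSup]
      apply iSup_mono'
      intro hj
      refine ⟨hj, ?_⟩
      rintro y ⟨x, hx, rfl⟩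
      have hx' := Module.End.mem_eigenspace_iff.mp hx
      show f x ∈ E j
      rw [hx']
      exact Submodule.smul_mem _ _ hx
    intro x hx
    exact hmap ⟨x, hx, rfl⟩
  -- Ψ σ is a member of the flag set
  have hΨmem : ∀ σ : Equiv.Perm (Fin K),
      (∀ i : Fin K, Ψ σ i.castSucc ≤ Ψ σ i.succ) ∧
      (∀ i : Fin (K + 1), finrank F ↥(Ψ σ i) = (i : ℕ)) ∧
      (∀ i : Fin (K + 1), ∀ x ∈ Ψ σ i, f x ∈ Ψ σ i) := by
    intro σ
    refine ⟨?_, hrankΨ σ, ?_⟩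
    · intro i
      apply biSup_mono
      intro j hj
      rw [Finset.mem_filter] at hj ⊢
      refine ⟨Finset.mem_univ j, ?_⟩
      have := hj.2
      rw [Fin.coe_castSucc] at this
      rw [Fin.val_succ]
      omega
    · intro i
      exact hinvsup _
  -- injectivity
  have hΨinj : Function.Injective Ψ := by
    intro σ τ h
    have key : ∀ (j : Fin K) (i : Fin (K + 1)),
        ((σ j : ℕ) < (i : ℕ)) ↔ ((τ j : ℕ) < (i : ℕ)) := by
      intro j i
      have a1 : ((σ j : ℕ) < (i : ℕ)) ↔ E j ≤ Ψ σ i := by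
        rw [hled]
        simp [Finset.mem_filter]
      have a2 : ((τ j : ℕ) < (i : ℕ)) ↔ E j ≤ Ψ τ i := by
        rw [hled]
        simp [Finset.mem_filter]
      rw [a1, a2, h]
    apply Equiv.ext
    intro j
    have h2 := key j ((σ j).succ)
    have h3 := key j ((τ j).succ)
    rw [Fin.val_succ] at h2 h3
    apply Fin.ext
    omega
  -- surjectivity
  have hsurj : ∀ W : Fin (K + 1) → Submodule F V,
      (∀ i : Fin K, W i.castSucc ≤ W i.succ) →
      (∀ i : Fin (K + 1), finrank F (W i) = (i : ℕ)) →
      (∀ i : Fin (K + 1), ∀ x ∈ W i, f x ∈ W i) → ∃ σ, Ψ σ = W := by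
    intro W hmono0 hrank hinv
    have hWmono : Monotone W := Fin.monotone_iff_le_succ.mpr hmono0
    have hWlast : W (Fin.last K) = ⊤ := by
      apply Submodule.eq_top_of_finrank_eq
      rw [hrank, Fin.val_last, hdim]
    have hW0 : W 0 = ⊥ := by
      apply Submodule.finrank_eq_zero.mp
      simpa using hrank 0
    have hex : ∀ j, ∃ n : ℕ, ∃ h : n < K + 1, E j ≤ W ⟨n, h⟩ := fun j =>
      ⟨K, Nat.lt_succ_self K, by
        rw [show (⟨K, Nat.lt_succ_self K⟩ : Fin (K + 1)) = Fin.last K from rfl, hWlast]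
        exact le_top⟩
    let g : Fin K → ℕ := fun j => Nat.find (hex j)
    have hgspec : ∀ j, ∃ h : g j < K + 1, E j ≤ W ⟨g j, h⟩ := fun j => Nat.find_spec (hex j)
    have hkey : ∀ (j : Fin K) (i : Fin (K + 1)), E j ≤ W i ↔ g j ≤ (i : ℕ) := by
      intro j i
      constructor
      · intro h
        exact Nat.find_min' (hex j) ⟨i.isLt, by rwa [Fin.eta]⟩
      · intro h
        obtain ⟨hlt, hle⟩ := hgspec j
        exact hle.trans (hWmono (by simpa [Fin.le_def] using h))
    have hg1 : ∀ j, 1 ≤ g j := by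
      intro j
      by_contra h
      have h0 : g j ≤ (0 : ℕ) := by omega
      have := (hkey j 0).mpr (by simpa using h0)
      rw [hW0] at this
      exact hEbot j (le_bot_iff.mp this)
    have hgK : ∀ j, g j ≤ K := fun j =>
      Nat.find_min' (hex j) ⟨Nat.lt_succ_self K, by
        rw [show (⟨K, Nat.lt_succ_self K⟩ : Fin (K + 1)) = Fin.last K from rfl, hWlast]
        exact le_top⟩
    set Si : Fin (K + 1) → Finset (Fin K) :=
      fun i => Finset.univ.filter (fun j => E j ≤ W i) with hSidef
    have hScard : ∀ i, (Si i).card = (i : ℕ) := by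
      intro i
      have h1 := hstruct (W i) (hinv i)
      have h2 : finrank F ↥(W i) = (Si i).card := by
        conv_lhs => rw [h1]
        rw [aux_finrank_biSup hEi, Finset.sum_congr rfl (fun j _ => hone j)]
        simp
        rfl
      rw [← h2]
      exact hrank i
    have hginj : Function.Injective g := by
      intro j j' hjj'
      by_contra hne
      have hmK : g j ≤ K := hgK j
      have hm1 : 1 ≤ g j := hg1 j
      set a : Fin (K + 1) := ⟨g j, by omega⟩ with ha
      set b : Fin (K + 1) := ⟨g j - 1, by omega⟩ with hb
      have hja : j ∈ Si a := Finset.mem_filter.mpr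
        ⟨Finset.mem_univ j, (hkey j a).mpr (le_refl _)⟩
      have hj'a : j' ∈ Si a := Finset.mem_filter.mpr
        ⟨Finset.mem_univ j', (hkey j' a).mpr (by rw [← hjj'])⟩
      have hjb : j ∉ Si b := by
        intro hmem
        have := (hkey j b).mp (Finset.mem_filter.mp hmem).2
        simp only [hb] at this
        omega
      have hj'b : j' ∉ Si b := by
        intro hmem
        have := (hkey j' b).mp (Finset.mem_filter.mp hmem).2
        rw [← hjj'] at this
        simp only [hb] at this
        omega
      have hsub : insert j (insert j' (Si b)) ⊆ Si a := by
        intro k hk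
        rcases Finset.mem_insert.mp hk with rfl | hk
        · exact hja
        rcases Finset.mem_insert.mp hk with rfl | hk
        · exact hj'a
        · rw [Finset.mem_filter] at hk ⊢
          exact ⟨hk.1, hk.2.trans (hWmono (by rw [Fin.le_def]; show g j - 1 ≤ g j; omega))⟩
      have hcardle := Finset.card_le_card hsub
      rw [Finset.card_insert_of_notMem (by
            simp only [Finset.mem_insert]
            push_neg
            exact ⟨hne, hjb⟩),
          Finset.card_insert_of_notMem hj'b] at hcardle
      have hc1 : (Si a).card = g j := by rw [hScard]
      have hc2 : (Si b).card = g j - 1 := by rw [hScard]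
      omega
    let σ0 : Fin K → Fin K := fun j => ⟨g j - 1, by
      have := hg1 j
      have := hgK j
      omega⟩
    have hσ0inj : Function.Injective σ0 := by
      intro j j' hjj'
      apply hginj
      have h1 := hg1 j
      have h2 := hg1 j'
      have hv : g j - 1 = g j' - 1 := congrArg Fin.val hjj'
      omega
    let σe : Equiv.Perm (Fin K) := Equiv.ofBijective σ0
      (Finite.injective_iff_bijective.mp hσ0inj)
    refine ⟨σe, funext fun i => ?_⟩
    show ⨆ j ∈ Finset.univ.filter
      (fun j => ((σe j : Fin K) : ℕ) < (i : ℕ)), E j = W i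
    have hfe : Finset.univ.filter (fun j => ((σe j : Fin K) : ℕ) < (i : ℕ)) = Si i := by
      ext j
      simp only [Finset.mem_filter, Finset.mem_univ, true_and, Si]
      have hj1 := hg1 j
      have : ((σe j : Fin K) : ℕ) = g j - 1 := rfl
      rw [this, hkey j i]
      omega
    rw [hfe]
    exact (hstruct (W i) (hinv i)).symm
  -- assembling
  have hseteq : {W : Fin (K + 1) → Submodule F V |
        (∀ i : Fin K, W i.castSucc ≤ W i.succ) ∧
        (∀ i : Fin (K + 1), Module.finrank F (W i) = (i : ℕ)) ∧
        (∀ i : Fin (K + 1), ∀ x ∈ W i, f x ∈ W i)} = Ψ '' Set.univ := by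
    apply Set.eq_of_subset_of_subset
    · rintro W ⟨h1, h2, h3⟩
      obtain ⟨σ, hσ⟩ := hsurj W h1 h2 h3
      exact ⟨σ, trivial, hσ⟩
    · rintro _ ⟨σ, -, rfl⟩
      exact hΨmem σ
  rw [hseteq]
  constructor
  · exact Set.finite_univ.image _
  · rw [Set.ncard_image_of_injective _ hΨinj, Set.ncard_univ, Nat.card_eq_fintype_card,
      Fintype.card_perm, Fintype.card_fin]
end

section
/- Let F be a field and z₁, z₂, z₃, z₄, y₁, y₂, y₃, y₄ ∈ F, each different from 0 and 1. Then the figure-eight gluing monomials satisfy the two automatic relations c₁c₂c₃c₄ = 1 and c₁c₂c₃c₄·c₅c₆c₇c₈ = 1 (one relation for each of the two torus slices); in particular also c₅c₆c₇c₈ = 1. -/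
/-- The gluing monomials of the two-tetrahedron `K = 3` decomposition of the
figure-eight knot complement satisfy the two automatic relations
`c₁c₂c₃c₄ = 1` and `c₁c₂c₃c₄·c₅c₆c₇c₈ = 1` (one for each torus slice);
in particular also `c₅c₆c₇c₈ = 1`. -/
theorem figure_eight_gluing_relations
    {F : Type*} [Field F] (z₁ z₂ z₃ z₄ y₁ y₂ y₃ y₄ : F)
    (hz₁0 : z₁ ≠ 0) (hz₁1 : z₁ ≠ 1) (hz₂0 : z₂ ≠ 0) (hz₂1 : z₂ ≠ 1)
    (hz₃0 : z₃ ≠ 0) (hz₃1 : z₃ ≠ 1) (hz₄0 : z₄ ≠ 0) (hz₄1 : z₄ ≠ 1)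
    (hy₁0 : y₁ ≠ 0) (hy₁1 : y₁ ≠ 1) (hy₂0 : y₂ ≠ 0) (hy₂1 : y₂ ≠ 1)
    (hy₃0 : y₃ ≠ 0) (hy₃1 : y₃ ≠ 1) (hy₄0 : y₄ ≠ 0) (hy₄1 : y₄ ≠ 1) :
    (z₁ * oPrime z₁ * oPrime z₃ * (oPrime y₂ * y₄ * oPrime y₄)) *
      (z₂ * oPrime z₂ * oPrime z₄ * (oPrime y₁ * y₃ * oPrime y₃)) *
      (oDPrime z₂ * z₃ * oDPrime z₃ * (y₁ * oDPrime y₁ * oDPrime y₄)) *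
      (oDPrime z₁ * z₄ * oDPrime z₄ * (y₂ * oDPrime y₂ * oDPrime y₃)) = 1 ∧
    ((z₁ * oPrime z₁ * oPrime z₃ * (oPrime y₂ * y₄ * oPrime y₄)) *
      (z₂ * oPrime z₂ * oPrime z₄ * (oPrime y₁ * y₃ * oPrime y₃)) *
      (oDPrime z₂ * z₃ * oDPrime z₃ * (y₁ * oDPrime y₁ * oDPrime y₄)) *
      (oDPrime z₁ * z₄ * oDPrime z₄ * (y₂ * oDPrime y₂ * oDPrime y₃))) *
    ((z₂ * oPrime z₄ * oDPrime z₃ * (y₄ * oPrime y₂ * oDPrime y₁)) *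
      (z₁ * oPrime z₃ * oDPrime z₄ * (y₃ * oPrime y₁ * oDPrime y₂)) *
      (z₄ * oPrime z₂ * oDPrime z₁ * (y₁ * oPrime y₃ * oDPrime y₄)) *
      (z₃ * oPrime z₁ * oDPrime z₂ * (y₂ * oPrime y₄ * oDPrime y₃))) = 1 ∧
    (z₂ * oPrime z₄ * oDPrime z₃ * (y₄ * oPrime y₂ * oDPrime y₁)) *
      (z₁ * oPrime z₃ * oDPrime z₄ * (y₃ * oPrime y₁ * oDPrime y₂)) *
      (z₄ * oPrime z₂ * oDPrime z₁ * (y₁ * oPrime y₃ * oDPrime y₄)) *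
      (z₃ * oPrime z₁ * oDPrime z₂ * (y₂ * oPrime y₄ * oDPrime y₃)) = 1 := by
  have h : ∀ t : F, t ≠ 0 → t ≠ 1 → t * oPrime t * oDPrime t = -1 := by
    intro t h0 h1
    have h1' : 1 - t ≠ 0 := sub_ne_zero.mpr (Ne.symm h1)
    unfold oPrime oDPrime
    field_simp
    ring
  have hz₁ := h z₁ hz₁0 hz₁1
  have hz₂ := h z₂ hz₂0 hz₂1
  have hz₃ := h z₃ hz₃0 hz₃1
  have hz₄ := h z₄ hz₄0 hz₄1
  have hy₁ := h y₁ hy₁0 hy₁1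
  have hy₂ := h y₂ hy₂0 hy₂1
  have hy₃ := h y₃ hy₃0 hy₃1
  have hy₄ := h y₄ hy₄0 hy₄1
  have e1 : (z₁ * oPrime z₁ * oPrime z₃ * (oPrime y₂ * y₄ * oPrime y₄)) *
      (z₂ * oPrime z₂ * oPrime z₄ * (oPrime y₁ * y₃ * oPrime y₃)) *
      (oDPrime z₂ * z₃ * oDPrime z₃ * (y₁ * oDPrime y₁ * oDPrime y₄)) *
      (oDPrime z₁ * z₄ * oDPrime z₄ * (y₂ * oDPrime y₂ * oDPrime y₃)) = 1 := by
    calc _ = (z₁ * oPrime z₁ * oDPrime z₁) * (z₂ * oPrime z₂ * oDPrime z₂) *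
        ((z₃ * oPrime z₃ * oDPrime z₃) * (z₄ * oPrime z₄ * oDPrime z₄)) *
        ((y₁ * oPrime y₁ * oDPrime y₁) * (y₂ * oPrime y₂ * oDPrime y₂) *
        ((y₃ * oPrime y₃ * oDPrime y₃) * (y₄ * oPrime y₄ * oDPrime y₄))) := by ring
      _ = 1 := by rw [hz₁, hz₂, hz₃, hz₄, hy₁, hy₂, hy₃, hy₄]; ring
  have e2 : (z₂ * oPrime z₄ * oDPrime z₃ * (y₄ * oPrime y₂ * oDPrime y₁)) *
      (z₁ * oPrime z₃ * oDPrime z₄ * (y₃ * oPrime y₁ * oDPrime y₂)) *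
      (z₄ * oPrime z₂ * oDPrime z₁ * (y₁ * oPrime y₃ * oDPrime y₄)) *
      (z₃ * oPrime z₁ * oDPrime z₂ * (y₂ * oPrime y₄ * oDPrime y₃)) = 1 := by
    calc _ = (z₁ * oPrime z₁ * oDPrime z₁) * (z₂ * oPrime z₂ * oDPrime z₂) *
        ((z₃ * oPrime z₃ * oDPrime z₃) * (z₄ * oPrime z₄ * oDPrime z₄)) *
        ((y₁ * oPrime y₁ * oDPrime y₁) * (y₂ * oPrime y₂ * oDPrime y₂) *
        ((y₃ * oPrime y₃ * oDPrime y₃) * (y₄ * oPrime y₄ * oDPrime y₄))) := by ring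
      _ = 1 := by rw [hz₁, hz₂, hz₃, hz₄, hy₁, hy₂, hy₃, hy₄]; ring
  exact ⟨e1, by rw [e1, e2, one_mul], e2⟩
end
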